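/- Fix a VASS MDP A and a set of counters C. Assume there exists a multi-component z of A with Δ_C(z) = 0 whose support contains the support of every multi-component in a set Y, where Y is the set of all multi-components y of A with support contained in the support of z. Then the set { Δ_C(y) : y ∈ Y } of effects restricted to C of elements of Y, viewed as a subset of ℚ^C, is a ℚ-linear subspace (it contains 0, is closed under addition, and is closed under multiplication by arbitrary rational scalars, including negative ones). -/
import Mathlib


/-- Transitions of a `d`-dimensional VASS over state space `Q`: a source state,
a counter update vector, and a target state. -/
abbrev VTrans (Q : Type*) (d : ℕ) := Q × (Fin d → ℤ) × Q

/-- Outgoing transitions of state `p` among the transitions `T`. -/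
def outT {Q : Type*} [DecidableEq Q] {d : ℕ} (T : Finset (VTrans Q d)) (p : Q) :
    Finset (VTrans Q d) :=
  T.filter fun t => t.1 = p

/-- Incoming transitions of state `p` among the transitions `T`. -/
def inT {Q : Type*} [DecidableEq Q] {d : ℕ} (T : Finset (VTrans Q d)) (p : Q) :
    Finset (VTrans Q d) :=
  T.filter fun t => t.2.2 = p

/-- `x ∈ ℚ^T` is a multi-component: it is nonnegative, satisfies flow conservation at every
state, and at each probabilistic state the flow on each outgoing transition is its probability
times the total incoming flow. -/
structure IsMultiComponent {Q : Type*} [DecidableEq Q] {d : ℕ} (T : Finset (VTrans Q d))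
    (Qp : Set Q) (P : VTrans Q d → ℚ) (x : VTrans Q d → ℚ) : Prop where
  nonneg : ∀ t ∈ T, 0 ≤ x t
  flow : ∀ p : Q, ∑ t ∈ outT T p, x t = ∑ t ∈ inT T p, x t
  prob : ∀ p ∈ Qp, ∀ t ∈ outT T p, x t = P t * ∑ t' ∈ inT T p, x t'

/-- The effect of `x` on counter `c`: `Δ(x)(c) = ∑_{t ∈ T} x(t) · u_t(c)`. -/
def effect {Q : Type*} {d : ℕ} (T : Finset (VTrans Q d)) (x : VTrans Q d → ℚ) (c : Fin d) : ℚ :=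
  ∑ t ∈ T, x t * (t.2.1 c : ℚ)

/-- The set of effects, restricted to counters in `C`, of all multi-components whose support is
contained in the support of `z`, viewed as a subset of `ℚ^C`. -/
def effectSet {Q : Type*} [DecidableEq Q] {d : ℕ} (T : Finset (VTrans Q d)) (Qp : Set Q)
    (P : VTrans Q d → ℚ) (C : Set (Fin d)) (z : VTrans Q d → ℚ) : Set (↥C → ℚ) :=
  {f | ∃ y : VTrans Q d → ℚ, IsMultiComponent T Qp P y ∧
        (∀ t ∈ T, 0 < y t → 0 < z t) ∧ (∀ c : ↥C, f c = effect T y (c : Fin d))}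

lemma mc_comb {Q : Type*} [DecidableEq Q] {d : ℕ} {T : Finset (VTrans Q d)}
    {Qp : Set Q} {P : VTrans Q d → ℚ} {y1 y2 : VTrans Q d → ℚ} (a1 a2 : ℚ)
    (h1 : IsMultiComponent T Qp P y1) (h2 : IsMultiComponent T Qp P y2)
    (hnn : ∀ t ∈ T, 0 ≤ a1 * y1 t + a2 * y2 t) :
    IsMultiComponent T Qp P (fun t => a1 * y1 t + a2 * y2 t) := by
  constructor
  · exact hnn
  · intro p
    simp only [Finset.sum_add_distrib, ← Finset.mul_sum, h1.flow p, h2.flow p]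
  · intro p hp t ht
    simp only [Finset.sum_add_distrib, ← Finset.mul_sum, h1.prob p hp t ht,
      h2.prob p hp t ht]
    ring

lemma effect_comb {Q : Type*} {d : ℕ} (T : Finset (VTrans Q d))
    (y1 y2 : VTrans Q d → ℚ) (a1 a2 : ℚ) (c : Fin d) :
    effect T (fun t => a1 * y1 t + a2 * y2 t) c
      = a1 * effect T y1 c + a2 * effect T y2 c := by
  simp only [effect, Finset.mul_sum, ← Finset.sum_add_distrib]
  exact Finset.sum_congr rfl fun t _ => by ring

/-- Given a multi-component `z` with `Δ_C(z) = 0`, the set of effects (restricted to `C`) of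
multi-components supported inside the support of `z` is a `ℚ`-linear subspace: it contains `0`,
is closed under addition, and is closed under multiplication by arbitrary rational scalars. -/
theorem effectSet_subspace {Q : Type*} [Fintype Q] [DecidableEq Q] {d : ℕ}
    (T : Finset (VTrans Q d)) (Qn Qp : Set Q) (P : VTrans Q d → ℚ)
    (hdisj : ∀ q : Q, ¬(q ∈ Qn ∧ q ∈ Qp)) (hcover : ∀ q : Q, q ∈ Qn ∨ q ∈ Qp)
    (hout : ∀ p : Q, (outT T p).Nonempty)
    (hPpos : ∀ p ∈ Qp, ∀ t ∈ outT T p, 0 < P t)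
    (hPsum : ∀ p ∈ Qp, ∑ t ∈ outT T p, P t = 1)
    (C : Set (Fin d)) (z : VTrans Q d → ℚ)
    (hz : IsMultiComponent T Qp P z) (hzC : ∀ c ∈ C, effect T z c = 0) :
    (0 ∈ effectSet T Qp P C z) ∧
    (∀ u ∈ effectSet T Qp P C z, ∀ v ∈ effectSet T Qp P C z, u + v ∈ effectSet T Qp P C z) ∧
    (∀ (a : ℚ), ∀ u ∈ effectSet T Qp P C z, a • u ∈ effectSet T Qp P C z) := by
  refine ⟨?_, ?_, ?_⟩
  · refine ⟨fun _ => 0, ?_, ?_, ?_⟩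
    · exact ⟨fun t _ => le_refl 0, fun p => by simp, fun p hp t ht => by simp⟩
    · intro t _ h; exact absurd h (lt_irrefl 0)
    · intro c; simp [effect]
  · rintro u ⟨y1, hy1, hs1, hu⟩ v ⟨y2, hy2, hs2, hv⟩
    refine ⟨fun t => 1 * y1 t + 1 * y2 t, mc_comb 1 1 hy1 hy2 ?_, ?_, ?_⟩
    · intro t ht
      have := hy1.nonneg t ht; have := hy2.nonneg t ht; linarith
    · intro t ht h
      rcases lt_or_ge 0 (y1 t) with h1 | h1
      · exact hs1 t ht h1
      · simp only [one_mul] at h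
        refine hs2 t ht ?_; linarith
    · intro c
      rw [effect_comb]
      simp [hu c, hv c]
  · rintro a u ⟨y, hy, hs, hu⟩
    rcases le_or_gt 0 a with ha | ha
    · refine ⟨fun t => a * y t + 0 * y t, mc_comb a 0 hy hy ?_, ?_, ?_⟩
      · intro t ht
        have := hy.nonneg t ht; nlinarith
      · intro t ht h
        refine hs t ht ?_
        by_contra hle
        push_neg at hle
        have h0 : y t = 0 := le_antisymm hle (hy.nonneg t ht)
        simp [h0] at h
      · intro c
        rw [effect_comb]
        simp [hu c, mul_comm]
    · set k : ℚ := ∑ t ∈ T, (-a) * y t / z t with hk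
      have hterm : ∀ t ∈ T, 0 ≤ (-a) * y t / z t := by
        intro t ht
        have h1 := hy.nonneg t ht; have h2 := hz.nonneg t ht
        exact div_nonneg (mul_nonneg (by linarith) h1) h2
      have hkz : ∀ t ∈ T, (-a) * y t ≤ k * z t := by
        intro t ht
        rcases lt_or_ge 0 (z t) with hzt | hzt
        · have hle : (-a) * y t / z t ≤ k := Finset.single_le_sum hterm ht
          calc (-a) * y t = ((-a) * y t / z t) * z t := by field_simp
            _ ≤ k * z t := by nlinarith
        · have hz0 : z t = 0 := le_antisymm hzt (hz.nonneg t ht)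
          have hy0 : y t = 0 := by
            by_contra hne
            have : 0 < y t := lt_of_le_of_ne (hy.nonneg t ht) (Ne.symm hne)
            have := hs t ht this
            linarith
          simp [hz0, hy0]
      refine ⟨fun t => k * z t + a * y t, mc_comb k a hz hy ?_, ?_, ?_⟩
      · intro t ht
        have := hkz t ht; linarith
      · intro t ht h
        rcases lt_or_ge 0 (z t) with hzt | hzt
        · exact hzt
        · have hz0 : z t = 0 := le_antisymm hzt (hz.nonneg t ht)
          have hy0 : y t = 0 := by
            by_contra hne
            have hpos : 0 < y t := lt_of_le_of_ne (hy.nonneg t ht) (Ne.symm hne)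
            have := hs t ht hpos
            linarith
          simp [hz0, hy0] at h
      · intro c
        rw [effect_comb, hzC c c.2]
        simp [hu c]
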